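/- (Lemma 5.1, uniform lower bound away from the singularity) Suppose V satisfies (V₁) and let H > 0. Set m := ((2-α) C₁ / (2H))^{1/α}. Let a < b and let u : [a,b] → ℝ^N \ {0} be continuous, twice continuously differentiable on (a,b), satisfying ü(t) + ∇V(u(t)) = 0 and ½|u̇(t)|² + V(u(t)) = H on (a,b). If |u(a)| ≥ m and |u(b)| ≥ m, then |u(t)| ≥ m for all t ∈ [a,b]. -/

import Mathlib

open scoped InnerProductSpace

/-- Lemma 5.1 (uniform lower bound away from the singularity): a solution of
`ü + ∇V(u) = 0` with energy `H` on `(a,b)` whose endpoint norms are at least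
`m = ((2-α) C₁ / (2H))^(1/α)` satisfies `‖u t‖ ≥ m` on all of `[a,b]`. -/
theorem stmt_10 {N : ℕ} (hN : 2 ≤ N) (V : EuclideanSpace ℝ (Fin N) → ℝ)
    (hV : ContDiffOn ℝ 1 V {0}ᶜ) (α : ℝ) (hα : α ∈ Set.Ioo (0 : ℝ) 2)
    (hV1 : ∀ x : EuclideanSpace ℝ (Fin N), x ≠ 0 →
      ⟪x, gradient V x⟫_ℝ = -α * V x ∧ -α * V x < 0)
    (H : ℝ) (hH : 0 < H)
    (m : ℝ)
    (hm : m = ((2 - α) * sInf (V '' Metric.sphere (0 : EuclideanSpace ℝ (Fin N)) 1)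
        / (2 * H)) ^ α⁻¹)
    (a b : ℝ) (hab : a < b) (u : ℝ → EuclideanSpace ℝ (Fin N))
    (hu : ContinuousOn u (Set.Icc a b))
    (hu0 : ∀ t ∈ Set.Icc a b, u t ≠ 0)
    (hu2 : ContDiffOn ℝ 2 u (Set.Ioo a b))
    (hode : ∀ t ∈ Set.Ioo a b, deriv (deriv u) t + gradient V (u t) = 0)
    (henergy : ∀ t ∈ Set.Ioo a b, (1/2) * ‖deriv u t‖ ^ 2 + V (u t) = H)
    (ha : m ≤ ‖u a‖) (hb : m ≤ ‖u b‖) :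
    ∀ t ∈ Set.Icc a b, m ≤ ‖u t‖ := by
  set C₁ := sInf (V '' Metric.sphere (0 : EuclideanSpace ℝ (Fin N)) 1) with hC₁def
  obtain ⟨hα0, hα2⟩ := hα
  -- positivity of V off the origin
  have hVpos : ∀ x : EuclideanSpace ℝ (Fin N), x ≠ 0 → 0 < V x := by
    intro x hx
    have h := (hV1 x hx).2
    nlinarith
  -- homogeneity: s ^ α * V (s • e) is constant in s > 0
  have hconst : ∀ e : EuclideanSpace ℝ (Fin N), e ≠ 0 → ∀ s t : ℝ, 0 < s → 0 < t →
      s ^ α * V (s • e) = t ^ α * V (t • e) := by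
    intro e he
    have hder : ∀ s : ℝ, 0 < s → HasDerivAt (fun z : ℝ => z ^ α * V (z • e)) 0 s := by
      intro s hs
      have hse : s • e ≠ 0 := smul_ne_zero hs.ne' he
      have hdV : DifferentiableAt ℝ V (s • e) :=
        (hV.differentiableOn one_ne_zero).differentiableAt
          (IsOpen.mem_nhds isOpen_compl_singleton hse)
      have hgrad : HasGradientAt V (gradient V (s • e)) (s • e) := hdV.hasGradientAt
      have hray : HasDerivAt (fun z : ℝ => z • e) e s := by
        simpa using (hasDerivAt_id s).smul_const e
      have hcomp : HasDerivAt (fun z : ℝ => V (z • e))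
          ((InnerProductSpace.toDual ℝ _ (gradient V (s • e))) e) s :=
        hgrad.hasFDerivAt.comp_hasDerivAt s hray
      have hval : (InnerProductSpace.toDual ℝ _ (gradient V (s • e))) e
          = s⁻¹ * (-α * V (s • e)) := by
        rw [InnerProductSpace.toDual_apply_apply]
        have h1 := (hV1 (s • e) hse).1
        rw [real_inner_smul_left] at h1
        rw [real_inner_comm, ← h1, inv_mul_cancel_left₀ hs.ne']
      rw [hval] at hcomp
      have hpow : HasDerivAt (fun z : ℝ => z ^ α) (α * s ^ (α - 1)) s :=
        Real.hasDerivAt_rpow_const (Or.inl hs.ne')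
      have hmul := hpow.mul hcomp
      have hs1 : s ^ (α - 1) = s ^ α / s := by
        rw [Real.rpow_sub hs, Real.rpow_one]
      refine hmul.congr_deriv ?_
      rw [hs1]
      field_simp
      ring
    intro s t hs ht
    have hdiff : DifferentiableOn ℝ (fun z : ℝ => z ^ α * V (z • e)) (Set.Ioi 0) :=
      fun z hz => ((hder z hz).differentiableAt).differentiableWithinAt
    refine (convex_Ioi (0:ℝ)).is_const_of_fderivWithin_eq_zero hdiff ?_ hs ht
    intro z hz
    rw [fderivWithin_of_isOpen isOpen_Ioi hz]
    have h := (hder z hz).hasFDerivAt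
    have h0 : ContinuousLinearMap.toSpanSingleton ℝ (0:ℝ) = 0 := by
      ext; simp
    rw [h0] at h
    exact h.fderiv
  -- the sphere is nonempty and compact; V attains a positive minimum
  have hsubC : Metric.sphere (0 : EuclideanSpace ℝ (Fin N)) 1 ⊆ {(0 : EuclideanSpace ℝ (Fin N))}ᶜ := by
    intro x hx
    rw [mem_sphere_zero_iff_norm] at hx
    simp only [Set.mem_compl_iff, Set.mem_singleton_iff]
    intro h
    rw [h] at hx; simp at hx
  have hsph : (Metric.sphere (0 : EuclideanSpace ℝ (Fin N)) 1).Nonempty := by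
    refine ⟨EuclideanSpace.single (⟨0, by omega⟩ : Fin N) (1:ℝ), ?_⟩
    simp [mem_sphere_zero_iff_norm, EuclideanSpace.norm_single]
  obtain ⟨x₀, hx₀s, hx₀min⟩ :=
    (isCompact_sphere (0 : EuclideanSpace ℝ (Fin N)) 1).exists_isMinOn hsph
      (hV.continuousOn.mono hsubC)
  have hleast : IsLeast (V '' Metric.sphere (0 : EuclideanSpace ℝ (Fin N)) 1) (V x₀) := by
    constructor
    · exact Set.mem_image_of_mem V hx₀s
    · rintro _ ⟨y, hy, rfl⟩
      exact hx₀min hy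
  have hC₁eq : C₁ = V x₀ := hleast.csInf_eq
  have hC₁pos : 0 < C₁ := by
    rw [hC₁eq]; exact hVpos x₀ (hsubC hx₀s)
  have hbdd : BddBelow (V '' Metric.sphere (0 : EuclideanSpace ℝ (Fin N)) 1) := ⟨V x₀, hleast.2⟩
  -- lower bound: C₁ ≤ ‖x‖ ^ α * V x
  have hlow : ∀ x : EuclideanSpace ℝ (Fin N), x ≠ 0 → C₁ ≤ ‖x‖ ^ α * V x := by
    intro x hx
    have hxn : (0:ℝ) < ‖x‖ := norm_pos_iff.mpr hx
    set e : EuclideanSpace ℝ (Fin N) := ‖x‖⁻¹ • x with hedef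
    have he1 : ‖e‖ = 1 := by
      rw [hedef, norm_smul, norm_inv, norm_norm, inv_mul_cancel₀ hxn.ne']
    have he0 : e ≠ 0 := by
      intro h; rw [h] at he1; simp at he1
    have hkey := hconst e he0 ‖x‖ 1 hxn one_pos
    rw [Real.one_rpow, one_mul, one_smul, hedef, smul_inv_smul₀ hxn.ne'] at hkey
    rw [hkey]
    exact csInf_le hbdd ⟨e, mem_sphere_zero_iff_norm.mpr he1, rfl⟩
  -- facts about m
  have hKpos : 0 < (2 - α) * C₁ / (2 * H) :=
    div_pos (mul_pos (by linarith) hC₁pos) (by linarith)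
  have hm_pos : 0 < m := by
    rw [hm]; exact Real.rpow_pos_of_pos hKpos _
  have hmα : m ^ α = (2 - α) * C₁ / (2 * H) := by
    rw [hm, ← Real.rpow_mul hKpos.le, inv_mul_cancel₀ hα0.ne', Real.rpow_one]
  -- critical bound: below radius m the potential is large
  have hcrit : ∀ x : EuclideanSpace ℝ (Fin N), x ≠ 0 → ‖x‖ < m → 2 * H < (2 - α) * V x := by
    intro x hx hlt
    have hxa : ‖x‖ ^ α < m ^ α := Real.rpow_lt_rpow (norm_nonneg x) hlt hα0
    have h1 : C₁ < m ^ α * V x :=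
      lt_of_le_of_lt (hlow x hx) (mul_lt_mul_of_pos_right hxa (hVpos x hx))
    rw [hmα, div_mul_eq_mul_div, lt_div_iff₀ (by linarith)] at h1
    nlinarith [hC₁pos, hH]
  -- derivative machinery for r t = ‖u t‖ ^ 2
  have hu' : ∀ t ∈ Set.Ioo a b, HasDerivAt u (deriv u t) t := by
    intro t ht
    exact ((hu2.differentiableOn (by norm_num)).differentiableAt
      (isOpen_Ioo.mem_nhds ht)).hasDerivAt
  have hdu2 : ContDiffOn ℝ 1 (deriv u) (Set.Ioo a b) :=
    hu2.deriv_of_isOpen isOpen_Ioo (by norm_num)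
  have hu'' : ∀ t ∈ Set.Ioo a b, HasDerivAt (deriv u) (deriv (deriv u) t) t := by
    intro t ht
    exact ((hdu2.differentiableOn one_ne_zero).differentiableAt
      (isOpen_Ioo.mem_nhds ht)).hasDerivAt
  have hr' : ∀ t ∈ Set.Ioo a b,
      HasDerivAt (fun t => ‖u t‖ ^ 2) (2 * ⟪u t, deriv u t⟫_ℝ) t := by
    intro t ht
    have h := HasDerivAt.inner (𝕜 := ℝ) (hu' t ht) (hu' t ht)
    have heq : (fun t => ‖u t‖ ^ 2) = fun t => ⟪u t, u t⟫_ℝ := by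
      funext s; rw [real_inner_self_eq_norm_sq]
    rw [heq]
    refine h.congr_deriv ?_
    rw [real_inner_comm (deriv u t) (u t)]
    ring
  have hr'' : ∀ t ∈ Set.Ioo a b,
      HasDerivAt (fun t => 2 * ⟪u t, deriv u t⟫_ℝ) (4 * H - 2 * (2 - α) * V (u t)) t := by
    intro t ht
    have h := (HasDerivAt.inner (𝕜 := ℝ) (hu' t ht) (hu'' t ht)).const_mul 2
    have hO : deriv (deriv u) t = -gradient V (u t) :=
      eq_neg_of_add_eq_zero_left (hode t ht)
    have hx0 : u t ≠ 0 := hu0 t (Set.mem_Icc_of_Ioo ht)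
    have h1 : ⟪u t, deriv (deriv u) t⟫_ℝ = α * V (u t) := by
      rw [hO, inner_neg_right, (hV1 (u t) hx0).1]; ring
    have h2 : ⟪deriv u t, deriv u t⟫_ℝ = 2 * (H - V (u t)) := by
      rw [real_inner_self_eq_norm_sq]
      have := henergy t ht
      linarith
    refine h.congr_deriv ?_
    rw [h1, h2]
    ring
  -- main argument
  intro t₀ ht₀
  by_contra hcon
  push_neg at hcon
  have hrt₀ : ‖u t₀‖ ^ 2 < m ^ 2 := pow_lt_pow_left₀ hcon (norm_nonneg (u t₀)) (by norm_num)
  have hra : m ^ 2 ≤ ‖u a‖ ^ 2 := pow_le_pow_left₀ hm_pos.le ha 2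
  have hrb : m ^ 2 ≤ ‖u b‖ ^ 2 := pow_le_pow_left₀ hm_pos.le hb 2
  have ht₀a : a < t₀ := by
    rcases lt_or_eq_of_le ht₀.1 with h | h
    · exact h
    · exfalso; rw [← h] at hcon; exact absurd ha (not_le.mpr hcon)
  have ht₀b : t₀ < b := by
    rcases lt_or_eq_of_le ht₀.2 with h | h
    · exact h
    · exfalso; rw [h] at hcon; exact absurd hb (not_le.mpr hcon)
  have hrc : ContinuousOn (fun t => ‖u t‖ ^ 2) (Set.Icc a b) := hu.norm.pow 2
  -- c : last time before t₀ with r ≥ m²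
  set S₁ : Set ℝ := Set.Icc a t₀ ∩ (fun t => ‖u t‖ ^ 2) ⁻¹' Set.Ici (m ^ 2) with hS₁def
  have hS₁closed : IsClosed S₁ :=
    (hrc.mono (Set.Icc_subset_Icc le_rfl ht₀.2)).preimage_isClosed_of_isClosed
      isClosed_Icc isClosed_Ici
  have haS₁ : a ∈ S₁ := ⟨⟨le_rfl, ht₀.1⟩, hra⟩
  have hS₁bdd : BddAbove S₁ := ⟨t₀, fun x hx => hx.1.2⟩
  set c := sSup S₁ with hcdef
  have hcS₁ : c ∈ S₁ := hS₁closed.csSup_mem ⟨a, haS₁⟩ hS₁bdd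
  have hct₀ : c < t₀ := by
    rcases lt_or_eq_of_le hcS₁.1.2 with h | h
    · exact h
    · exfalso; rw [h] at hcS₁
      exact absurd hcS₁.2 (not_le.mpr hrt₀)
  have hcsmall : ∀ t, c < t → t ≤ t₀ → ‖u t‖ ^ 2 < m ^ 2 := by
    intro t h1 h2
    by_contra h
    push_neg at h
    have : t ∈ S₁ := ⟨⟨le_trans hcS₁.1.1 h1.le, h2⟩, h⟩
    exact absurd (le_csSup hS₁bdd this) (not_le.mpr h1)
  -- d : first time after t₀ with r ≥ m²
  set S₂ : Set ℝ := Set.Icc t₀ b ∩ (fun t => ‖u t‖ ^ 2) ⁻¹' Set.Ici (m ^ 2) with hS₂def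
  have hS₂closed : IsClosed S₂ :=
    (hrc.mono (Set.Icc_subset_Icc ht₀.1 le_rfl)).preimage_isClosed_of_isClosed
      isClosed_Icc isClosed_Ici
  have hbS₂ : b ∈ S₂ := ⟨⟨ht₀.2, le_rfl⟩, hrb⟩
  have hS₂bdd : BddBelow S₂ := ⟨t₀, fun x hx => hx.1.1⟩
  set d := sInf S₂ with hddef
  have hdS₂ : d ∈ S₂ := hS₂closed.csInf_mem ⟨b, hbS₂⟩ hS₂bdd
  have ht₀d : t₀ < d := by
    rcases lt_or_eq_of_le hdS₂.1.1 with h | h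
    · exact h
    · exfalso; rw [← h] at hdS₂
      exact absurd hdS₂.2 (not_le.mpr hrt₀)
  have hdsmall : ∀ t, t₀ ≤ t → t < d → ‖u t‖ ^ 2 < m ^ 2 := by
    intro t h1 h2
    by_contra h
    push_neg at h
    have : t ∈ S₂ := ⟨⟨h1, le_trans h2.le hdS₂.1.2⟩, h⟩
    exact absurd (csInf_le hS₂bdd this) (not_le.mpr h2)
  have hcd : c < d := hct₀.trans ht₀d
  have hIccsub : Set.Icc c d ⊆ Set.Icc a b :=
    Set.Icc_subset_Icc hcS₁.1.1 hdS₂.1.2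
  have hIoosub : Set.Ioo c d ⊆ Set.Ioo a b := fun t ht =>
    ⟨lt_of_le_of_lt hcS₁.1.1 ht.1, lt_of_lt_of_le ht.2 hdS₂.1.2⟩
  have hsmall : ∀ t ∈ Set.Ioo c d, ‖u t‖ ^ 2 < m ^ 2 := by
    intro t ht
    rcases le_total t t₀ with h | h
    · exact hcsmall t ht.1 h
    · exact hdsmall t h ht.2
  -- concavity of r on [c,d]
  have hconc : ConcaveOn ℝ (Set.Icc c d) (fun t => ‖u t‖ ^ 2) := by
    apply concaveOn_of_hasDerivWithinAt2_nonpos (convex_Icc c d)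
      (f' := fun t => 2 * ⟪u t, deriv u t⟫_ℝ)
      (f'' := fun t => 4 * H - 2 * (2 - α) * V (u t))
    · exact hrc.mono hIccsub
    · intro x hx
      rw [interior_Icc] at hx
      exact (hr' x (hIoosub hx)).hasDerivWithinAt
    · intro x hx
      rw [interior_Icc] at hx
      exact (hr'' x (hIoosub hx)).hasDerivWithinAt
    · intro x hx
      rw [interior_Icc] at hx
      have hx0 : u x ≠ 0 := hu0 x (hIccsub (Set.mem_Icc_of_Ioo hx))
      have hxm : ‖u x‖ < m :=
        lt_of_pow_lt_pow_left₀ 2 hm_pos.le (hsmall x hx)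
      have := hcrit (u x) hx0 hxm
      linarith
  -- contradiction via concavity at t₀
  have hc_mem : c ∈ Set.Icc c d := ⟨le_rfl, hcd.le⟩
  have hd_mem : d ∈ Set.Icc c d := ⟨hcd.le, le_rfl⟩
  have hdc : (0:ℝ) < d - c := by linarith
  have hlam : (0:ℝ) ≤ (d - t₀) / (d - c) := div_nonneg (by linarith) hdc.le
  have hmu : (0:ℝ) ≤ (t₀ - c) / (d - c) := by
    apply div_nonneg (by linarith) hdc.le
  have hsum : (d - t₀) / (d - c) + (t₀ - c) / (d - c) = 1 := by
    field_simp
    ring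
  have hcomb : (d - t₀) / (d - c) * c + (t₀ - c) / (d - c) * d = t₀ := by
    field_simp
    ring
  have h : (d - t₀) / (d - c) * ‖u c‖ ^ 2 + (t₀ - c) / (d - c) * ‖u d‖ ^ 2 ≤ ‖u t₀‖ ^ 2 := by
    have h0 := hconc.2 hc_mem hd_mem hlam hmu hsum
    simpa [smul_eq_mul, hcomb] using h0
  have hge : m ^ 2 ≤ (d - t₀) / (d - c) * ‖u c‖ ^ 2 + (t₀ - c) / (d - c) * ‖u d‖ ^ 2 := by
    have h1 : m ^ 2 ≤ ‖u c‖ ^ 2 := hcS₁.2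
    have h2 : m ^ 2 ≤ ‖u d‖ ^ 2 := hdS₂.2
    have e1 : (d - t₀) / (d - c) * m ^ 2 + (t₀ - c) / (d - c) * m ^ 2 = m ^ 2 := by
      rw [← add_mul, hsum, one_mul]
    linarith [mul_le_mul_of_nonneg_left h1 hlam, mul_le_mul_of_nonneg_left h2 hmu, e1]
  linarith
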